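/- Let K be a class of L-structures that, up to isomorphism, is a finite set of finite structures, and let A be a substructure of B with B finite and A, B ∈ K. If A is an epic substructure of B in K, then for every b₁ ∈ B there exist a finite conjunction of atomic formulas α(x₁,…,xₙ,y₁,…,y_m) with m ≥ 1, elements a₁,…,aₙ ∈ A, and elements b₂,…,b_m ∈ B such that: (a) α(x̄,ȳ) defines an m-tuple-valued function in K, i.e., K ⊨ ∀x̄∀ȳ∀z̄ (α(x̄,ȳ) ∧ α(x̄,z̄) → ȳ = z̄); and (b) (b₁,…,b_m) is the unique m-tuple from B with B ⊨ α(ā, b̄). -/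

import Mathlib

open FirstOrder FirstOrder.Language

universe u v w

namespace Epic

variable {L : FirstOrder.Language.{u, v}}

/-- A finite conjunction of atomic formulas. -/
inductive IsConjAtomic {α : Type w} : ∀ {n : ℕ}, L.BoundedFormula α n → Prop
  | of_isAtomic {n : ℕ} {φ : L.BoundedFormula α n} : φ.IsAtomic → IsConjAtomic φ
  | inf {n : ℕ} {φ ψ : L.BoundedFormula α n} :
      IsConjAtomic φ → IsConjAtomic ψ → IsConjAtomic (φ ⊓ ψ)

/-- A primitive positive formula: a block of existential quantifiers in front of a
finite conjunction of atomic formulas. -/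
inductive IsPP {α : Type w} : ∀ {n : ℕ}, L.BoundedFormula α n → Prop
  | of_conj {n : ℕ} {φ : L.BoundedFormula α n} : IsConjAtomic φ → IsPP φ
  | ex {n : ℕ} {φ : L.BoundedFormula α (n + 1)} : IsPP φ → IsPP φ.ex

variable (L) in
/-- A class of `L`-structures with universes in `Type u`. -/
def StrClass := ∀ (M : Type u) [L.Structure M], Prop

/-- The formula `φ(x₁,…,xₙ,y)` defines a (partial) function in the class `K`:
`K ⊨ ∀ x̄ y z, φ(x̄,y) ∧ φ(x̄,z) → y = z`. -/
def DefinesFn (K : StrClass L) {n : ℕ} (φ : L.Formula (Fin (n + 1))) : Prop :=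
  ∀ (C : Type u) [L.Structure C], K C → ∀ (v : Fin n → C) (y z : C),
    φ.Realize (Fin.snoc v y) → φ.Realize (Fin.snoc v z) → y = z

/-- `A` is an epic substructure of `B` in the class `K`: any two homomorphisms from `B`
into a member of `K` agreeing on `A` are equal. -/
def IsEpicSubstructure (K : StrClass L) {B : Type u} [L.Structure B]
    (A : L.Substructure B) : Prop :=
  ∀ (C : Type u) [L.Structure C], K C → ∀ g g' : B →[L] C,
    (∀ a ∈ A, g a = g' a) → g = g'

/-- `h` is a `K`-epimorphism: it is right-cancellable for homomorphisms into members of `K`. -/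
def IsEpi (K : StrClass L) {A B : Type u} [L.Structure A] [L.Structure B]
    (h : A →[L] B) : Prop :=
  ∀ (C : Type u) [L.Structure C], K C → ∀ g g' : B →[L] C,
    g.comp h = g'.comp h → g = g'

/-- The formula `α(x₁,…,xₙ,y₁,…,yₘ)` defines an `m`-tuple-valued function in `K`:
`K ⊨ ∀ x̄ ȳ z̄, α(x̄,ȳ) ∧ α(x̄,z̄) → ȳ = z̄`. -/
def DefinesTupleFn (K : StrClass L) {n m : ℕ} (α : L.Formula (Fin n ⊕ Fin m)) : Prop :=
  ∀ (C : Type u) [L.Structure C], K C → ∀ (v : Fin n → C) (y z : Fin m → C),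
    α.Realize (Sum.elim v y) → α.Realize (Sum.elim v z) → y = z

lemma isConjAtomic_foldr {α : Type w} (l : List (L.Formula α)) (t : L.Formula α)
    (hl : ∀ φ ∈ l, IsConjAtomic φ) (ht : IsConjAtomic t) :
    IsConjAtomic (l.foldr (· ⊓ ·) t) := by
  induction l with
  | nil => exact ht
  | cons a l ih =>
      exact IsConjAtomic.inf (hl a (by simp)) (ih fun φ hφ => hl φ (by simp [hφ]))

lemma realize_foldr_inf {α : Type w} {M : Type u} [L.Structure M]
    (l : List (L.Formula α)) (t : L.Formula α) (v : α → M) :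
    (l.foldr (· ⊓ ·) t).Realize v ↔ (∀ φ ∈ l, φ.Realize v) ∧ t.Realize v := by
  induction l with
  | nil => simp
  | cons a l ih =>
      simp only [List.foldr_cons, Formula.realize_inf, ih, List.mem_cons]
      constructor
      · rintro ⟨ha, hl, ht⟩
        exact ⟨fun φ hφ => hφ.elim (fun h => h ▸ ha) (hl φ), ht⟩
      · rintro ⟨h, ht⟩
        exact ⟨h a (Or.inl rfl), fun φ hφ => h φ (Or.inr hφ), ht⟩

/-- Theorem 6, (1) ⇒ (2).  If `K` is, up to isomorphism, a finite set of
finite structures, `B` is finite, `A ≤ B` with `A, B ∈ K`, and `A` is an epic substructure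
of `B` in `K`, then every `b₁ ∈ B` is the first coordinate of the value of a quantifier-free
tuple-valued function, given by a finite conjunction of atomic formulas defining a function
in `K`, at a tuple of parameters from `A`. -/
theorem epic_substructure_finite_case {L : FirstOrder.Language.{u, v}} (K : StrClass L)
    (k : ℕ) (T : Fin k → Type u) [∀ i, L.Structure (T i)] (hTfin : ∀ i, Finite (T i))
    (hKiso : ∀ (M : Type u) [L.Structure M], K M ↔ ∃ i, Nonempty (M ≃[L] T i))
    {B : Type u} [L.Structure B] [Finite B] (A : L.Substructure B)
    (hA : K A) (hB : K B) (hepic : IsEpicSubstructure K A) :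
    ∀ b₁ : B, ∃ (n m : ℕ) (α : L.Formula (Fin n ⊕ Fin (m + 1)))
      (a : Fin n → A) (b : Fin (m + 1) → B),
        IsConjAtomic α ∧
        DefinesTupleFn K α ∧
        b 0 = b₁ ∧
        α.Realize (Sum.elim (fun i => (a i : B)) b) ∧
        ∀ b' : Fin (m + 1) → B, α.Realize (Sum.elim (fun i => (a i : B)) b') → b' = b := by
  intro b₁
  classical
  haveI : Nonempty B := ⟨b₁⟩
  set n := Nat.card A with hn
  let eA : Fin n ≃ A := (Finite.equivFin A).symm
  have hBcard : Nat.card B ≠ 0 := Nat.card_ne_zero.mpr ⟨⟨b₁⟩, inferInstance⟩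
  obtain ⟨m, hm⟩ : ∃ m, Nat.card B = m + 1 := ⟨Nat.card B - 1, by omega⟩
  let e0 : B ≃ Fin (m + 1) := Finite.equivFinOfCardEq hm
  let e : Fin (m + 1) ≃ B := (Equiv.swap 0 (e0 b₁)).trans e0.symm
  have he0 : e 0 = b₁ := by simp [e]
  let aB : Fin n → B := fun i => ((eA i : A) : B)
  -- the family of atomic formulas forming the atomic "positive diagram"
  let FamIdx : Type (max u v) :=
    ((Σ l : ℕ, L.Functions l × (Fin l → B)) ⊕
      (Σ l : ℕ, { p : L.Relations l × (Fin l → B) // Structure.RelMap p.1 p.2 })) ⊕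
      (ULift.{max u v} (Fin n))
  let fml : FamIdx → L.Formula (Fin n ⊕ Fin (m + 1)) := fun idx =>
    match idx with
    | Sum.inl (Sum.inl ⟨_, f, c⟩) =>
        Term.equal (Term.func f (fun q => Term.var (Sum.inr (e.symm (c q)))))
          (Term.var (Sum.inr (e.symm (Structure.funMap f c))))
    | Sum.inl (Sum.inr ⟨_, ⟨(R, c), _⟩⟩) =>
        Relations.formula R (fun q => Term.var (Sum.inr (e.symm (c q))))
    | Sum.inr i =>
        Term.equal (Term.var (Sum.inl i.down)) (Term.var (Sum.inr (e.symm (aB i.down))))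
  have hatom : ∀ idx, (fml idx).IsAtomic := by
    rintro ((⟨l, f, c⟩ | ⟨l, ⟨⟨R, c⟩, hR⟩⟩) | i)
    · exact BoundedFormula.IsAtomic.equal _ _
    · exact BoundedFormula.IsAtomic.rel _ _
    · exact BoundedFormula.IsAtomic.equal _ _
  let vB : Fin n ⊕ Fin (m + 1) → B := Sum.elim aB (fun j => e j)
  have hbase : ∀ idx, (fml idx).Realize vB := by
    rintro ((⟨l, f, c⟩ | ⟨l, ⟨⟨R, c⟩, hR⟩⟩) | i)
    · simp [fml, Formula.realize_equal, Term.realize, vB]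
    · simpa [fml, Formula.realize_rel, Term.realize, vB] using hR
    · simp [fml, Formula.realize_equal, Term.realize, vB]
  -- key construction: from a realization of all family formulas we get a homomorphism
  have key : ∀ (C : Type u) [L.Structure C] (v : Fin n → C) (y : Fin (m + 1) → C),
      (∀ idx, (fml idx).Realize (Sum.elim v y)) →
      ∃ g : B →[L] C, (∀ x : B, g x = y (e.symm x)) ∧ (∀ i, g (aB i) = v i) := by
    intro C _ v y h
    refine ⟨⟨fun x => y (e.symm x), ?_, ?_⟩, fun _ => rfl, ?_⟩
    · intro l f x
      have h1 := h (Sum.inl (Sum.inl ⟨l, f, x⟩))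
      simp only [fml, Formula.realize_equal, Term.realize, Sum.elim_inr] at h1
      exact h1.symm
    · intro l r x hx
      have h1 := h (Sum.inl (Sum.inr ⟨l, ⟨(r, x), hx⟩⟩))
      have h2 : Structure.RelMap r (fun i => y (e.symm (x i))) := by
        simpa [fml, Formula.realize_rel, Term.realize, Function.comp] using h1
      exact h2
    · intro i
      have h1 := h (Sum.inr ⟨i⟩)
      simp only [fml, Formula.realize_equal, Term.realize, Sum.elim_inl, Sum.elim_inr] at h1
      exact h1.symm
  -- no two distinct tuples in a member of K satisfy the whole family
  have nobad : ∀ (i : Fin k) (v : Fin n → T i) (y z : Fin (m + 1) → T i),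
      (∀ idx, (fml idx).Realize (Sum.elim v y)) →
      (∀ idx, (fml idx).Realize (Sum.elim v z)) → y = z := by
    intro i v y z hy hz
    obtain ⟨g, hg, hga⟩ := key (T i) v y hy
    obtain ⟨g', hg', hga'⟩ := key (T i) v z hz
    have hK : K (T i) := (hKiso (T i)).mpr ⟨i, ⟨FirstOrder.Language.Equiv.refl L (T i)⟩⟩
    have hgg : g = g' := by
      refine hepic (T i) hK g g' ?_
      intro x hx
      obtain ⟨j, hj⟩ : ∃ j, aB j = x := ⟨eA.symm ⟨x, hx⟩, by simp [aB]⟩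
      rw [← hj, hga, hga']
    funext j
    have h1 := hg (e j)
    have h2 := hg' (e j)
    rw [Equiv.symm_apply_apply] at h1 h2
    rw [← h1, ← h2, hgg]
  -- configurations
  let Config := (i : Fin k) × ((Fin n → T i) × ((Fin (m + 1) → T i) × (Fin (m + 1) → T i)))
  haveI hfin : ∀ i, Finite ((Fin n → T i) × ((Fin (m + 1) → T i) × (Fin (m + 1) → T i))) :=
    fun i => by haveI := hTfin i; infer_instance
  haveI : Finite Config := by dsimp only [Config]; infer_instance
  haveI : Fintype Config := Fintype.ofFinite Config
  have wit : ∀ cfg : Config, cfg.2.2.1 ≠ cfg.2.2.2 →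
      ∃ idx, ¬ ((fml idx).Realize (Sum.elim cfg.2.1 cfg.2.2.1) ∧
        (fml idx).Realize (Sum.elim cfg.2.1 cfg.2.2.2)) := by
    intro cfg hne
    by_contra hcon
    push_neg at hcon
    exact hne (nobad cfg.1 cfg.2.1 cfg.2.2.1 cfg.2.2.2 (fun idx => (hcon idx).1)
      (fun idx => (hcon idx).2))
  let triv : L.Formula (Fin n ⊕ Fin (m + 1)) :=
    Term.equal (Term.var (Sum.inr (0 : Fin (m + 1)))) (Term.var (Sum.inr (0 : Fin (m + 1))))
  have htrivatom : triv.IsAtomic := BoundedFormula.IsAtomic.equal _ _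
  have htrivreal : ∀ (C : Type u) [L.Structure C] (w : Fin n ⊕ Fin (m + 1) → C),
      triv.Realize w := by
    intro C _ w
    simp [triv, Formula.realize_equal]
  let cf : Config → L.Formula (Fin n ⊕ Fin (m + 1)) := fun cfg =>
    if h : cfg.2.2.1 ≠ cfg.2.2.2 then fml (Classical.choose (wit cfg h)) else triv
  let lst := (Finset.univ : Finset Config).toList.map cf
  let α : L.Formula (Fin n ⊕ Fin (m + 1)) := lst.foldr (· ⊓ ·) triv
  have hcfatom : ∀ cfg, (cf cfg).IsAtomic := by
    intro cfg
    by_cases h : cfg.2.2.1 ≠ cfg.2.2.2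
    · rw [show cf cfg = fml (Classical.choose (wit cfg h)) from dif_pos h]
      exact hatom _
    · rw [show cf cfg = triv from dif_neg h]
      exact htrivatom
  have hcfbase : ∀ cfg, (cf cfg).Realize vB := by
    intro cfg
    by_cases h : cfg.2.2.1 ≠ cfg.2.2.2
    · rw [show cf cfg = fml (Classical.choose (wit cfg h)) from dif_pos h]
      exact hbase _
    · rw [show cf cfg = triv from dif_neg h]
      exact htrivreal B vB
  have hαatom : IsConjAtomic α := by
    refine isConjAtomic_foldr lst triv ?_ (IsConjAtomic.of_isAtomic htrivatom)
    intro φ hφ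
    obtain ⟨cfg, _, rfl⟩ := List.mem_map.mp hφ
    exact IsConjAtomic.of_isAtomic (hcfatom cfg)
  have hαbase : α.Realize vB := by
    refine (realize_foldr_inf lst triv vB).mpr ⟨?_, htrivreal B vB⟩
    intro φ hφ
    obtain ⟨cfg, _, rfl⟩ := List.mem_map.mp hφ
    exact hcfbase cfg
  have hdef : DefinesTupleFn K α := by
    intro C _ hC v y z hy hz
    obtain ⟨i, ⟨g⟩⟩ := (hKiso C).mp hC
    by_contra hne
    have hne' : (g ∘ y) ≠ (g ∘ z) := fun h =>
      hne (funext fun j => g.toEquiv.injective (congrFun h j))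
    let cfg : Config := ⟨i, (g ∘ v, (g ∘ y, g ∘ z))⟩
    have hw := Classical.choose_spec (wit cfg hne')
    set idx0 := Classical.choose (wit cfg hne') with hidx0
    have hmem : cf cfg ∈ lst :=
      List.mem_map.mpr ⟨cfg, Finset.mem_toList.mpr (Finset.mem_univ _), rfl⟩
    have h1 := ((realize_foldr_inf lst triv _).mp hy).1 _ hmem
    have h2 := ((realize_foldr_inf lst triv _).mp hz).1 _ hmem
    rw [show cf cfg = fml idx0 from dif_pos hne'] at h1 h2
    have h1' := (StrongHomClass.realize_formula g (fml idx0)).mpr h1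
    have h2' := (StrongHomClass.realize_formula g (fml idx0)).mpr h2
    rw [Sum.comp_elim] at h1' h2'
    exact hw ⟨h1', h2'⟩
  refine ⟨n, m, α, fun i => eA i, fun j => e j, hαatom, hdef, he0, hαbase, ?_⟩
  intro b' hb'
  exact hdef B hB aB b' (fun j => e j) hb' hαbase

end Epic
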